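/- Fix ℏ ∈ ℂ with ℏ ≠ 0 and N ∈ ℂ. There is exactly one formal power series g = Σ_{k≥0} c_k·u^k ∈ ℂ[[u]] with c_0 = 1 satisfying the differential equation (u²/4)·g''(u) + (u/2)·g'(u) − (1/ℏ)·g'(u) + ((1 − 4N²)/16)·g(u) = 0, and its coefficients are c_k = ℏ^k·B_k(N)/(16^k·k!) where B_k(N) = Π_{i=1}^{k} ((2i−1)² − 4N²). (This differential equation expresses that Φ(λ) = g(1/λ) is an eigenfunction with eigenvalue 1/ℏ² of the Kac–Schwarz operator c_N = (1/4)·d²/dλ² + (1/ℏ)·d/dλ + 1/ℏ² + (1−4N²)/(16λ²); thus the first basis vector of the generalized Brezin–Gross–Witten point of the Sato Grassmannian is uniquely determined by c_N together with the normalization c_0 = 1.) -/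

import Mathlib

noncomputable section

namespace BGW5

/-- Formal derivative of a one-variable formal power series. -/
def d (g : PowerSeries ℂ) : PowerSeries ℂ := PowerSeries.derivative ℂ g

/-- `B_k(N) = Π_{i=1}^{k} ((2i−1)² − 4N²)`, with `B_0(N) = 1`. -/
def B (k : ℕ) (N : ℂ) : ℂ := ∏ i ∈ Finset.range k, (((2*i+1 : ℕ) : ℂ)^2 - 4*N^2)

/-- The differential equation `(u²/4)·g'' + (u/2)·g' − (1/ℏ)·g' + ((1−4N²)/16)·g = 0`. -/
def ODE (ℏ N : ℂ) (g : PowerSeries ℂ) : Prop :=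
  (1/4 : ℂ) • (PowerSeries.X^2 * d (d g)) + (1/2 : ℂ) • (PowerSeries.X * d g)
    - ℏ⁻¹ • d g + ((1 - 4*N^2)/16) • g = 0

end BGW5

open BGW5 PowerSeries

namespace BGW5aux

lemma coeff_d (g : PowerSeries ℂ) (k : ℕ) :
    coeff k (d g) = ((k : ℂ) + 1) * coeff (k+1) g := by
  simp [d, PowerSeries.coeff_derivative]; ring

lemma coeff_X_d (g : PowerSeries ℂ) (k : ℕ) :
    coeff k (X * d g) = (k : ℂ) * coeff k g := by
  cases k with
  | zero => simp
  | succ n => rw [coeff_succ_X_mul, coeff_d]; push_cast; ring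

lemma coeff_X2_dd (g : PowerSeries ℂ) (k : ℕ) :
    coeff k (X^2 * d (d g)) = (k : ℂ) * ((k : ℂ) - 1) * coeff k g := by
  match k with
  | 0 => simp [pow_two, mul_assoc]
  | 1 => rw [pow_two, mul_assoc, coeff_succ_X_mul]; simp
  | (n+2) =>
      rw [pow_two, mul_assoc, coeff_succ_X_mul, coeff_succ_X_mul, coeff_d, coeff_d]
      push_cast; ring

lemma ode_iff (ℏ N : ℂ) (g : PowerSeries ℂ) :
    ODE ℏ N g ↔ ∀ k : ℕ,
      (1/4 : ℂ) * ((k : ℂ) * ((k : ℂ) - 1) * coeff k g)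
        + (1/2 : ℂ) * ((k : ℂ) * coeff k g)
        - ℏ⁻¹ * (((k : ℂ) + 1) * coeff (k+1) g)
        + (1 - 4*N^2)/16 * coeff k g = 0 := by
  rw [ODE, PowerSeries.ext_iff]
  refine forall_congr' fun k => ?_
  rw [map_add, map_sub, map_add, map_smul, map_smul, map_smul, map_smul,
    coeff_X2_dd, coeff_X_d, coeff_d, map_zero]
  simp [smul_eq_mul]

lemma B_succ (k : ℕ) (N : ℂ) :
    B (k+1) N = B k N * ((2*(k:ℂ)+1)^2 - 4*N^2) := by
  rw [B, Finset.prod_range_succ, ← B]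
  push_cast
  ring

lemma recur (ℏ N : ℂ) (hℏ : ℏ ≠ 0) (g : PowerSeries ℂ) (h : ODE ℏ N g) (k : ℕ) :
    16 * ((k:ℂ)+1) * coeff (k+1) g =
      ℏ * ((2*(k:ℂ)+1)^2 - 4*N^2) * coeff k g := by
  have e := (ode_iff ℏ N g).mp h k
  have hinv : ℏ * ℏ⁻¹ = 1 := mul_inv_cancel₀ hℏ
  linear_combination (-16*ℏ) * e - 16*((k:ℂ)+1)*(coeff (k+1) g) * hinv

lemma coeff_formula (ℏ N : ℂ) (hℏ : ℏ ≠ 0) (g : PowerSeries ℂ)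
    (h0 : constantCoeff g = 1) (h : ODE ℏ N g) (k : ℕ) :
    coeff k g = ℏ^k * B k N / (16^k * (Nat.factorial k : ℂ)) := by
  induction k with
  | zero => simpa [B] using h0
  | succ n ih =>
      have hr := recur ℏ N hℏ g h n
      rw [ih] at hr
      have h16 : (16:ℂ) ≠ 0 := by norm_num
      have hn : ((n:ℂ)+1) ≠ 0 := by
        have := Nat.cast_add_one_ne_zero (R := ℂ) n; simpa using this
      have hf : ((Nat.factorial n : ℂ)) ≠ 0 := by
        exact_mod_cast Nat.cast_ne_zero.mpr (Nat.factorial_ne_zero n)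
      rw [B_succ, Nat.factorial_succ]
      push_cast
      rw [eq_div_iff (mul_ne_zero (pow_ne_zero _ h16) (mul_ne_zero hn hf))]
      field_simp at hr
      linear_combination hr

/-- The explicit solution. -/
def gsol (ℏ N : ℂ) : PowerSeries ℂ :=
  PowerSeries.mk fun k => ℏ^k * B k N / (16^k * (Nat.factorial k : ℂ))

lemma gsol_const (ℏ N : ℂ) : constantCoeff (gsol ℏ N) = 1 := by
  have : coeff 0 (gsol ℏ N) = 1 := by simp [gsol, B]
  simpa using this

lemma gsol_ode (ℏ N : ℂ) (hℏ : ℏ ≠ 0) : ODE ℏ N (gsol ℏ N) := by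
  rw [ode_iff]
  intro k
  have h16 : (16:ℂ) ≠ 0 := by norm_num
  have hk : ((k:ℂ)+1) ≠ 0 := by
    have := Nat.cast_add_one_ne_zero (R := ℂ) k; simpa using this
  have hf : ((Nat.factorial k : ℂ)) ≠ 0 := by
    exact_mod_cast Nat.cast_ne_zero.mpr (Nat.factorial_ne_zero k)
  have h16k : (16:ℂ)^k ≠ 0 := pow_ne_zero _ h16
  have key : ℏ⁻¹ * (((k:ℂ)+1) *
      (ℏ^(k+1) * (B k N * ((2*(k:ℂ)+1)^2 - 4*N^2)) /
        (16^(k+1) * (((k:ℂ)+1) * (Nat.factorial k : ℂ))))) =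
      ((2*(k:ℂ)+1)^2 - 4*N^2)/16 * (ℏ^k * B k N / (16^k * (Nat.factorial k : ℂ))) := by
    field_simp
    ring
  simp only [gsol, coeff_mk]
  rw [B_succ, Nat.factorial_succ]
  push_cast
  linear_combination (-1 : ℂ) * key

end BGW5aux

open BGW5aux

/-- there is exactly one formal power series `g ∈ ℂ[[u]]` with constant
term `1` satisfying the ODE (expressing that `Φ(λ) = g(1/λ)` is an eigenfunction of the
Kac–Schwarz operator `c_N` with eigenvalue `1/ℏ²`), and its coefficients are
`c_k = ℏ^k·B_k(N)/(16^k·k!)`. -/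
theorem kac_schwarz_eigenfunction_unique (ℏ N : ℂ) (hℏ : ℏ ≠ 0) :
    (∃! g : PowerSeries ℂ, PowerSeries.constantCoeff g = 1 ∧ ODE ℏ N g) ∧
    (∀ g : PowerSeries ℂ, PowerSeries.constantCoeff g = 1 → ODE ℏ N g →
      ∀ k : ℕ, PowerSeries.coeff k g =
        ℏ^k * B k N / (16^k * (Nat.factorial k : ℂ))) := by
  constructor
  · refine ⟨gsol ℏ N, ⟨gsol_const ℏ N, gsol_ode ℏ N hℏ⟩, ?_⟩
    rintro g ⟨h0, h⟩
    ext k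
    rw [coeff_formula ℏ N hℏ g h0 h k]
    simp [gsol]
  · exact fun g h0 h k => coeff_formula ℏ N hℏ g h0 h k
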